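/- Let A : H₁ → H₂ be a bounded linear operator between real Hilbert spaces with adjoint A*, T : H₂ → H₂ a k-demicontractive map (k ∈ [0,1)) with A x* ∈ Fix(T), and x ∈ H₁ with T(Ax) ≠ Ax. Set ρ = (1-k)‖(I-T)Ax‖² / (2‖A*(I-T)Ax‖²) and u = x + ρ·A*(T(Ax) - Ax). Then ‖u - x*‖² ≤ ‖x - x*‖² - ((1-k)²/4)·‖(T - I)Ax‖⁴ / ‖A*(T - I)Ax‖². -/

import Mathlib

open scoped RealInnerProductSpace

theorem stmt19 {H₁ H₂ : Type*}
    [NormedAddCommGroup H₁] [InnerProductSpace ℝ H₁] [CompleteSpace H₁]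
    [NormedAddCommGroup H₂] [InnerProductSpace ℝ H₂] [CompleteSpace H₂]
    (A : H₁ →L[ℝ] H₂) (T : H₂ → H₂) (k : ℝ) (hk0 : 0 ≤ k) (hk1 : k < 1)
    (hT : ∀ y q : H₂, T q = q → ‖T y - q‖ ^ 2 ≤ ‖y - q‖ ^ 2 + k * ‖T y - y‖ ^ 2)
    (xs : H₁) (hxs : T (A xs) = A xs)
    (x : H₁) (hne : T (A x) ≠ A x)
    (hAne : ContinuousLinearMap.adjoint A (A x - T (A x)) ≠ 0)
    (ρ : ℝ)
    (hρ : ρ = (1 - k) * ‖A x - T (A x)‖ ^ 2 /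
      (2 * ‖ContinuousLinearMap.adjoint A (A x - T (A x))‖ ^ 2))
    (u : H₁) (hu : u = x + ρ • ContinuousLinearMap.adjoint A (T (A x) - A x)) :
    ‖u - xs‖ ^ 2 ≤ ‖x - xs‖ ^ 2 -
      ((1 - k) ^ 2 / 4) * ‖T (A x) - A x‖ ^ 4 /
        ‖ContinuousLinearMap.adjoint A (T (A x) - A x)‖ ^ 2 := by
  set v := ContinuousLinearMap.adjoint A (T (A x) - A x) with hv
  have hvne : v ≠ 0 := by
    intro h
    apply hAne
    have : A x - T (A x) = -(T (A x) - A x) := by abel_nf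
    rw [this, map_neg, ← hv, h, neg_zero]
  have hnormeq : ‖ContinuousLinearMap.adjoint A (A x - T (A x))‖ = ‖v‖ := by
    rw [hv, ← norm_neg, ← map_neg]; congr 1; abel
  have hcrev : ‖A x - T (A x)‖ = ‖T (A x) - A x‖ := norm_sub_rev _ _
  set c := ‖T (A x) - A x‖ ^ 2 with hc
  set d := ‖v‖ ^ 2 with hd
  have hd0 : 0 < d := pow_pos (norm_pos_iff.mpr hvne) 2
  have hc0 : 0 < c := by
    exact pow_pos (norm_pos_iff.mpr (sub_ne_zero.mpr hne)) 2
  have hρ' : ρ = (1 - k) * c / (2 * d) := by rw [hρ, hnormeq, hcrev]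
  have hρ0 : 0 ≤ ρ := by
    rw [hρ']
    have h1k : (0:ℝ) ≤ 1 - k := by linarith
    exact div_nonneg (mul_nonneg h1k hc0.le) (by positivity)
  -- demicontractive inequality
  have hdem := hT (A x) (A xs) hxs
  have hexp : ‖T (A x) - A xs‖ ^ 2
      = c + 2 * (inner ℝ (T (A x) - A x) (A x - A xs) : ℝ) + ‖A x - A xs‖ ^ 2 := by
    have : T (A x) - A xs = (T (A x) - A x) + (A x - A xs) := by abel_nf
    rw [this, norm_add_sq_real, hc]
  have hip : (inner ℝ (T (A x) - A x) (A x - A xs) : ℝ) ≤ -((1 - k) / 2) * c := by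
    rw [hexp] at hdem
    have : ‖T (A x) - A x‖ ^ 2 = c := rfl
    nlinarith [hdem]
  -- expand ‖u - xs‖²
  have hux : u - xs = (x - xs) + ρ • v := by rw [hu]; abel
  have hinner : (inner ℝ (x - xs) v : ℝ) = (inner ℝ (A x - A xs) (T (A x) - A x) : ℝ) := by
    rw [hv, ContinuousLinearMap.adjoint_inner_right, map_sub]
  have hnorm : ‖u - xs‖ ^ 2 = ‖x - xs‖ ^ 2 + 2 * (ρ * (inner ℝ (x - xs) v : ℝ)) + ρ ^ 2 * d := by
    rw [hux, norm_add_sq_real, real_inner_smul_right, norm_smul, hd]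
    simp [mul_pow, sq_abs]
  have hip2 : (inner ℝ (x - xs) v : ℝ) ≤ -((1 - k) / 2) * c := by
    rw [hinner, real_inner_comm]
    exact hip
  have key : ‖u - xs‖ ^ 2 ≤ ‖x - xs‖ ^ 2 - ρ * (1 - k) * c + ρ ^ 2 * d := by
    rw [hnorm]
    nlinarith [hip2, hρ0]
  have h4 : ‖T (A x) - A x‖ ^ 4 = c ^ 2 := by rw [hc]; ring
  rw [h4]
  have hfinal : ‖x - xs‖ ^ 2 - ρ * (1 - k) * c + ρ ^ 2 * d
      = ‖x - xs‖ ^ 2 - (1 - k) ^ 2 / 4 * c ^ 2 / d := by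
    rw [hρ']
    field_simp
    ring
  linarith [key, hfinal.le]
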